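/- For every ν ≥ 2 and every x > 0, K_{ν+1}(x)/K_ν(x) > (ν + 2 + √((ν − 2)² + ((ν − 2)/(ν − 1))·x²))/x. -/

import Mathlib

open Real MeasureTheory Set Filter

/-- The modified Bessel function of the second kind,
`K_ν(x) = ∫_0^∞ e^{-x cosh t} cosh(ν t) dt`. -/
noncomputable def besselK (ν x : ℝ) : ℝ :=
  ∫ t in Set.Ioi (0 : ℝ), Real.exp (-x * Real.cosh t) * Real.cosh (ν * t)

noncomputable def besselL (ν x : ℝ) : ℝ :=
  ∫ t in Set.Ioi (0 : ℝ), Real.exp (-x * Real.cosh t) * (Real.sinh t * Real.sinh (ν * t))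

lemma exp_arg_bound (x c t : ℝ) (hx : 0 < x) (ht : 0 ≤ t) :
    -x * Real.cosh t + c * t ≤ (c + 1) ^ 2 * 2 / x - t := by
  have h2 : Real.exp t = Real.exp (t/2) * Real.exp (t/2) := by
    rw [← Real.exp_add]; norm_num
  have h3 : (1 + t/2)^2 ≤ Real.exp t := by
    rw [h2]
    nlinarith [Real.add_one_le_exp (t/2), Real.exp_pos (t/2)]
  have h4 : (1 + t/2)^2 / 2 ≤ Real.cosh t := by
    rw [Real.cosh_eq]
    nlinarith [Real.exp_pos (-t)]
  rw [← sub_nonneg]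
  have key : 0 ≤ ((c+1)^2*2/x - t) - (-x * ((1+t/2)^2/2) + c*t) := by
    have : ((c+1)^2*2/x - t) - (-x * ((1+t/2)^2/2) + c*t)
        = ((c+1)^2*2 + x*(x * ((1+t/2)^2/2) - (c+1)*t)) / x := by
      field_simp; ring
    rw [this]
    apply div_nonneg _ hx.le
    nlinarith [sq_nonneg (x*t/2 - 2*(c+1)), mul_nonneg (mul_nonneg hx.le hx.le) ht, mul_pos hx hx]
  nlinarith [key, h4, hx]

lemma abs_cosh_le_exp (y : ℝ) : |Real.cosh y| ≤ Real.exp |y| := by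
  rw [abs_of_pos (Real.cosh_pos y), Real.cosh_eq]
  have h1 := Real.exp_le_exp.mpr (le_abs_self y)
  have h2 := Real.exp_le_exp.mpr (neg_le_abs y)
  linarith

lemma abs_sinh_le_exp (y : ℝ) : |Real.sinh y| ≤ Real.exp |y| := by
  rw [abs_le, Real.sinh_eq]
  have h1 := Real.exp_le_exp.mpr (le_abs_self y)
  have h2 := Real.exp_le_exp.mpr (neg_le_abs y)
  have h3 := (Real.exp_pos y).le
  have h4 := (Real.exp_pos (-y)).le
  constructor <;> nlinarith

lemma integrable_master {x c C : ℝ} (hx : 0 < x) (hC : 0 ≤ C) {g : ℝ → ℝ} (hg : Continuous g)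
    (hb : ∀ t, 0 ≤ t → |g t| ≤ C * Real.exp (c * t)) :
    IntegrableOn (fun t => Real.exp (-x * Real.cosh t) * g t) (Ioi (0:ℝ)) := by
  have hcont : Continuous (fun t => Real.exp (-x * Real.cosh t) * g t) :=
    (Real.continuous_exp.comp (by continuity)).mul hg
  apply Integrable.mono'
    (((exp_neg_integrableOn_Ioi 0 (b := 1) one_pos).const_mul (Real.exp ((c+1)^2*2/x))).const_mul C)
  · exact hcont.aestronglyMeasurable.restrict
  · filter_upwards [ae_restrict_mem measurableSet_Ioi] with t ht
    have ht' : (0:ℝ) ≤ t := le_of_lt ht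
    have h1 : ‖Real.exp (-x * Real.cosh t) * g t‖ ≤ C * Real.exp (-x * Real.cosh t + c * t) := by
      rw [Real.exp_add, norm_mul, Real.norm_eq_abs, Real.norm_eq_abs, Real.abs_exp,
        show C * (Real.exp (-x*Real.cosh t) * Real.exp (c*t))
          = Real.exp (-x*Real.cosh t) * (C * Real.exp (c*t)) by ring]
      exact mul_le_mul_of_nonneg_left (hb t ht') (Real.exp_pos _).le
    refine h1.trans ?_
    have h2 : Real.exp (-x * Real.cosh t + c * t) ≤ Real.exp ((c+1)^2*2/x) * Real.exp (-1 * t) := by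
      rw [← Real.exp_add]
      exact Real.exp_le_exp.mpr (by linarith [exp_arg_bound x c t hx ht'])
    calc C * Real.exp (-x * Real.cosh t + c * t)
        ≤ C * (Real.exp ((c+1)^2*2/x) * Real.exp (-1 * t)) := by
          exact mul_le_mul_of_nonneg_left h2 hC
      _ = C * (Real.exp ((c+1)^2*2/x) * Real.exp (-1 * t)) := rfl

lemma integrable_K {ν x : ℝ} (hx : 0 < x) :
    IntegrableOn (fun t => Real.exp (-x * Real.cosh t) * Real.cosh (ν * t)) (Ioi (0:ℝ)) := by
  apply integrable_master hx zero_le_one (by continuity)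
  intro t ht
  have := abs_cosh_le_exp (ν * t)
  rw [one_mul]
  refine this.trans (Real.exp_le_exp.mpr ?_)
  rw [abs_mul, abs_of_nonneg ht]

lemma integrable_L {ν x : ℝ} (hx : 0 < x) :
    IntegrableOn (fun t => Real.exp (-x * Real.cosh t) * (Real.sinh t * Real.sinh (ν * t)))
      (Ioi (0:ℝ)) := by
  apply integrable_master hx zero_le_one (c := |ν| + 1) (by continuity)
  intro t ht
  rw [one_mul, abs_mul]
  have h1 := abs_sinh_le_exp t
  have h2 := abs_sinh_le_exp (ν * t)
  have h3 : |Real.sinh t| * |Real.sinh (ν*t)| ≤ Real.exp |t| * Real.exp |ν*t| :=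
    mul_le_mul h1 h2 (abs_nonneg _) (Real.exp_pos _).le
  refine h3.trans ?_
  rw [← Real.exp_add]
  apply Real.exp_le_exp.mpr
  rw [abs_of_nonneg ht, abs_mul, abs_of_nonneg ht]
  nlinarith [le_abs_self ν, abs_nonneg ν]

lemma besselK_pos {ν x : ℝ} (hx : 0 < x) : 0 < besselK ν x := by
  rw [besselK, integral_pos_iff_support_of_nonneg_ae]
  · have hsupp : Function.support
        (fun t => Real.exp (-x * Real.cosh t) * Real.cosh (ν * t)) = univ := by
      ext t
      simpa [Function.mem_support] using
        mul_ne_zero (Real.exp_ne_zero (-x * Real.cosh t)) (Real.cosh_pos (ν * t)).ne'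
    rw [hsupp, Measure.restrict_apply_univ, Real.volume_Ioi]
    exact ENNReal.zero_lt_top
  · exact Eventually.of_forall fun t => by positivity
  · exact integrable_K hx

lemma parts {ν x : ℝ} (hx : 0 < x) : x * besselL ν x = ν * besselK ν x := by
  have hder : ∀ t ∈ Ioi (0:ℝ),
      HasDerivAt (fun t => Real.exp (-x * Real.cosh t) * Real.sinh (ν * t))
        (Real.exp (-x * Real.cosh t) * ((-x * Real.sinh t) * Real.sinh (ν * t)
          + ν * Real.cosh (ν * t))) t := by
    intro t _
    have h1 : HasDerivAt (fun t : ℝ => -x * Real.cosh t) (-x * Real.sinh t) t :=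
      (Real.hasDerivAt_cosh t).const_mul (-x)
    have h2 := h1.exp
    have h3 : HasDerivAt (fun t : ℝ => ν * t) ν t := by
      simpa using (hasDerivAt_id t).const_mul ν
    have h4 : HasDerivAt (fun t : ℝ => Real.sinh (ν * t)) (Real.cosh (ν * t) * ν) t :=
      (Real.hasDerivAt_sinh (ν * t)).comp t h3
    have := h2.mul h4
    exact this.congr_deriv (by ring)
  have hint : IntegrableOn
      (fun t => Real.exp (-x * Real.cosh t) * ((-x * Real.sinh t) * Real.sinh (ν * t)
        + ν * Real.cosh (ν * t))) (Ioi (0:ℝ)) := by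
    apply integrable_master hx (C := x + |ν|) (c := |ν| + 1)
      (by positivity) (by continuity)
    intro t ht
    have h1 := abs_sinh_le_exp t
    have h2 := abs_sinh_le_exp (ν * t)
    have h3 := abs_cosh_le_exp (ν * t)
    have habs : |ν * t| = |ν| * t := by rw [abs_mul, abs_of_nonneg ht]
    rw [abs_of_nonneg ht] at h1
    rw [habs] at h2 h3
    have he1 : Real.exp t * Real.exp (|ν| * t) = Real.exp ((|ν| + 1) * t) := by
      rw [← Real.exp_add]; ring_nf
    have he2 : Real.exp (|ν| * t) ≤ Real.exp ((|ν| + 1) * t) :=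
      Real.exp_le_exp.mpr (by nlinarith)
    have hA : |(-x * Real.sinh t) * Real.sinh (ν * t)| ≤ x * Real.exp ((|ν| + 1) * t) := by
      rw [abs_mul, abs_mul, abs_neg, abs_of_pos hx, mul_assoc, ← he1]
      apply mul_le_mul_of_nonneg_left _ hx.le
      exact mul_le_mul h1 h2 (abs_nonneg _) (Real.exp_pos _).le
    have hB : |ν * Real.cosh (ν * t)| ≤ |ν| * Real.exp ((|ν| + 1) * t) := by
      rw [abs_mul]
      exact mul_le_mul_of_nonneg_left (h3.trans he2) (abs_nonneg ν)
    calc |(-x * Real.sinh t) * Real.sinh (ν * t) + ν * Real.cosh (ν * t)|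
        ≤ |(-x * Real.sinh t) * Real.sinh (ν * t)| + |ν * Real.cosh (ν * t)| := abs_add_le _ _
      _ ≤ x * Real.exp ((|ν| + 1) * t) + |ν| * Real.exp ((|ν| + 1) * t) := add_le_add hA hB
      _ = (x + |ν|) * Real.exp ((|ν| + 1) * t) := by ring
  have htend : Tendsto (fun t => Real.exp (-x * Real.cosh t) * Real.sinh (ν * t))
      atTop (nhds 0) := by
    have hg : Tendsto (fun t : ℝ => Real.exp ((|ν| + 1) ^ 2 * 2 / x) * Real.exp (-t))
        atTop (nhds 0) := by
      rw [show (0:ℝ) = Real.exp ((|ν| + 1) ^ 2 * 2 / x) * 0 by ring]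
      exact (Real.tendsto_exp_neg_atTop_nhds_zero).const_mul _
    apply squeeze_zero_norm' _ hg
    · filter_upwards [eventually_ge_atTop (0:ℝ)] with t ht
      have h2 := abs_sinh_le_exp (ν * t)
      rw [abs_mul, abs_of_nonneg ht] at h2
      rw [norm_mul, Real.norm_eq_abs, Real.norm_eq_abs, Real.abs_exp]
      calc Real.exp (-x * Real.cosh t) * |Real.sinh (ν * t)|
          ≤ Real.exp (-x * Real.cosh t) * Real.exp (|ν| * t) :=
            mul_le_mul_of_nonneg_left h2 (Real.exp_pos _).le
        _ = Real.exp (-x * Real.cosh t + |ν| * t) := by rw [← Real.exp_add]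
        _ ≤ Real.exp ((|ν|+1)^2*2/x) * Real.exp (-t) := by
            rw [← Real.exp_add]
            exact Real.exp_le_exp.mpr (by
              have := exp_arg_bound x |ν| t hx ht
              linarith)
  have hcont : ContinuousWithinAt (fun t => Real.exp (-x * Real.cosh t) * Real.sinh (ν * t))
      (Ici (0:ℝ)) 0 :=
    ((Real.continuous_exp.comp (by continuity)).mul (by continuity)).continuousWithinAt
  have key := integral_Ioi_of_hasDerivAt_of_tendsto hcont hder hint htend
  simp only [Real.sinh_zero, mul_zero, zero_sub, neg_zero] at key
  have hsplit : ∫ t in Ioi (0:ℝ), Real.exp (-x * Real.cosh t) * ((-x * Real.sinh t) *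
      Real.sinh (ν * t) + ν * Real.cosh (ν * t))
      = -x * besselL ν x + ν * besselK ν x := by
    rw [besselL, besselK, ← integral_const_mul, ← integral_const_mul, ← integral_add
      ((integrable_L hx).const_mul (-x)) ((integrable_K hx).const_mul ν)]
    apply setIntegral_congr_fun measurableSet_Ioi
    intro t _
    ring
  rw [hsplit] at key
  linarith

lemma recurrence {ν x : ℝ} (hx : 0 < x) :
    besselK (ν + 1) x = besselK (ν - 1) x + 2 * ν / x * besselK ν x := by
  have h1 : besselK (ν+1) x - besselK (ν-1) x = 2 * besselL ν x := by
    rw [besselK, besselK, besselL, ← integral_sub (integrable_K hx) (integrable_K hx),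
      ← integral_const_mul]
    apply setIntegral_congr_fun measurableSet_Ioi
    intro t _
    simp only
    rw [show (ν+1)*t = ν*t + t by ring, show (ν-1)*t = ν*t - t by ring,
      Real.cosh_add, Real.cosh_sub]
    ring
  have h2 := parts (ν := ν) hx
  have hL : 2 * besselL ν x = 2 * ν / x * besselK ν x := by
    rw [div_mul_eq_mul_div, eq_div_iff hx.ne']
    linarith [h2]
  linarith [h1, hL]

lemma hyp_identity (μ s t : ℝ) :
    Real.sinh s * (Real.sinh (μ*s) * Real.cosh (μ*t))
      + Real.sinh t * (Real.sinh (μ*t) * Real.cosh (μ*s))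
      - (Real.sinh s * (Real.sinh ((μ-1)*s) * Real.cosh ((μ+1)*t))
        + Real.sinh t * (Real.sinh ((μ-1)*t) * Real.cosh ((μ+1)*s)))
    = 2*(Real.sinh ((s+t)/2))^2 * Real.cosh ((s+t)/2) * Real.cosh ((μ-1/2)*(s-t))
      + 2*(Real.sinh ((s-t)/2))^2 * Real.cosh ((s-t)/2) * Real.cosh ((μ-1/2)*(s+t)) := by
  have ha := Real.exp_ne_zero (s/2)
  have hb := Real.exp_ne_zero (t/2)
  have hp := Real.exp_ne_zero (μ*s)
  have hq := Real.exp_ne_zero (μ*t)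
  have h1 : Real.exp s = Real.exp (s/2) * Real.exp (s/2) := by
    rw [← Real.exp_add]; norm_num
  have h2 : Real.exp (-s) = (Real.exp (s/2) * Real.exp (s/2))⁻¹ := by
    rw [Real.exp_neg, h1]
  have h3 : Real.exp t = Real.exp (t/2) * Real.exp (t/2) := by
    rw [← Real.exp_add]; norm_num
  have h4 : Real.exp (-t) = (Real.exp (t/2) * Real.exp (t/2))⁻¹ := by
    rw [Real.exp_neg, h3]
  have h6 : Real.exp (-(μ*s)) = (Real.exp (μ*s))⁻¹ := Real.exp_neg _
  have h8 : Real.exp (-(μ*t)) = (Real.exp (μ*t))⁻¹ := Real.exp_neg _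
  have h9 : Real.exp ((μ-1)*s) = Real.exp (μ*s) * (Real.exp (s/2) * Real.exp (s/2))⁻¹ := by
    rw [show (μ-1)*s = μ*s + -s by ring, Real.exp_add, h2]
  have h10 : Real.exp (-((μ-1)*s)) = (Real.exp (μ*s))⁻¹ * (Real.exp (s/2) * Real.exp (s/2)) := by
    rw [show -((μ-1)*s) = -(μ*s) + s by ring, Real.exp_add, h6, h1]
  have h11 : Real.exp ((μ+1)*t) = Real.exp (μ*t) * (Real.exp (t/2) * Real.exp (t/2)) := by
    rw [show (μ+1)*t = μ*t + t by ring, Real.exp_add, h3]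
  have h12 : Real.exp (-((μ+1)*t)) = (Real.exp (μ*t))⁻¹ * (Real.exp (t/2) * Real.exp (t/2))⁻¹ := by
    rw [show -((μ+1)*t) = -(μ*t) + -t by ring, Real.exp_add, h8, h4]
  have h13 : Real.exp ((μ-1)*t) = Real.exp (μ*t) * (Real.exp (t/2) * Real.exp (t/2))⁻¹ := by
    rw [show (μ-1)*t = μ*t + -t by ring, Real.exp_add, h4]
  have h14 : Real.exp (-((μ-1)*t)) = (Real.exp (μ*t))⁻¹ * (Real.exp (t/2) * Real.exp (t/2)) := by
    rw [show -((μ-1)*t) = -(μ*t) + t by ring, Real.exp_add, h8, h3]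
  have h15 : Real.exp ((μ+1)*s) = Real.exp (μ*s) * (Real.exp (s/2) * Real.exp (s/2)) := by
    rw [show (μ+1)*s = μ*s + s by ring, Real.exp_add, h1]
  have h16 : Real.exp (-((μ+1)*s)) = (Real.exp (μ*s))⁻¹ * (Real.exp (s/2) * Real.exp (s/2))⁻¹ := by
    rw [show -((μ+1)*s) = -(μ*s) + -s by ring, Real.exp_add, h6, h2]
  have h17 : Real.exp ((s+t)/2) = Real.exp (s/2) * Real.exp (t/2) := by
    rw [← Real.exp_add]; ring_nf
  have h18 : Real.exp (-((s+t)/2)) = (Real.exp (s/2))⁻¹ * (Real.exp (t/2))⁻¹ := by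
    rw [show -((s+t)/2) = -(s/2) + -(t/2) by ring, Real.exp_add, Real.exp_neg, Real.exp_neg]
  have h19 : Real.exp ((s-t)/2) = Real.exp (s/2) * (Real.exp (t/2))⁻¹ := by
    rw [show (s-t)/2 = s/2 + -(t/2) by ring, Real.exp_add, Real.exp_neg]
  have h20 : Real.exp (-((s-t)/2)) = (Real.exp (s/2))⁻¹ * Real.exp (t/2) := by
    rw [show -((s-t)/2) = -(s/2) + t/2 by ring, Real.exp_add, Real.exp_neg]
  have h21 : Real.exp ((μ-1/2)*(s-t))
      = Real.exp (μ*s) * (Real.exp (μ*t))⁻¹ * ((Real.exp (s/2))⁻¹ * Real.exp (t/2)) := by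
    rw [show (μ-1/2)*(s-t) = μ*s + -(μ*t) + (-(s/2) + t/2) by ring, Real.exp_add, Real.exp_add,
      h8, Real.exp_add, Real.exp_neg]
  have h22 : Real.exp (-((μ-1/2)*(s-t)))
      = (Real.exp (μ*s))⁻¹ * Real.exp (μ*t) * (Real.exp (s/2) * (Real.exp (t/2))⁻¹) := by
    rw [show -((μ-1/2)*(s-t)) = -(μ*s) + μ*t + (s/2 + -(t/2)) by ring, Real.exp_add, Real.exp_add,
      h6, Real.exp_add, Real.exp_neg]
  have h23 : Real.exp ((μ-1/2)*(s+t))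
      = Real.exp (μ*s) * Real.exp (μ*t) * ((Real.exp (s/2))⁻¹ * (Real.exp (t/2))⁻¹) := by
    rw [show (μ-1/2)*(s+t) = μ*s + μ*t + (-(s/2) + -(t/2)) by ring, Real.exp_add, Real.exp_add,
      Real.exp_add, Real.exp_neg, Real.exp_neg]
  have h24 : Real.exp (-((μ-1/2)*(s+t)))
      = (Real.exp (μ*s))⁻¹ * (Real.exp (μ*t))⁻¹ * (Real.exp (s/2) * Real.exp (t/2)) := by
    rw [show -((μ-1/2)*(s+t)) = -(μ*s) + -(μ*t) + (s/2 + t/2) by ring, Real.exp_add, Real.exp_add,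
      h6, h8, Real.exp_add]
  simp only [Real.sinh_eq, Real.cosh_eq, h1, h2, h3, h4, h6, h8, h9, h10, h11, h12, h13, h14,
    h15, h16, h17, h18, h19, h20, h21, h22, h23, h24]
  field_simp
  ring

lemma key_pos (μ s t : ℝ) (hs : 0 < s) (ht : 0 < t) :
    0 < Real.sinh s * (Real.sinh (μ*s) * Real.cosh (μ*t))
      + Real.sinh t * (Real.sinh (μ*t) * Real.cosh (μ*s))
      - (Real.sinh s * (Real.sinh ((μ-1)*s) * Real.cosh ((μ+1)*t))
        + Real.sinh t * (Real.sinh ((μ-1)*t) * Real.cosh ((μ+1)*s))) := by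
  rw [hyp_identity]
  have h1 : 0 < Real.sinh ((s+t)/2) := Real.sinh_pos_iff.mpr (by linarith)
  have h2 := Real.cosh_pos ((s+t)/2)
  have h3 := Real.cosh_pos ((μ-1/2)*(s-t))
  have h4 := Real.cosh_pos ((s-t)/2)
  have h5 := Real.cosh_pos ((μ-1/2)*(s+t))
  have h6 : (0:ℝ) ≤ (Real.sinh ((s-t)/2))^2 := sq_nonneg _
  positivity

lemma turan {μ x : ℝ} (hx : 0 < x) :
    (μ - 1) * (besselK (μ - 1) x * besselK (μ + 1) x) < μ * (besselK μ x)^2 := by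
  -- double integral positivity
  set m : Measure ℝ := volume.restrict (Ioi (0:ℝ)) with hm
  set E : ℝ → ℝ := fun t => Real.exp (-x * Real.cosh t) with hE
  set f1 : ℝ → ℝ := fun t => E t * (Real.sinh t * Real.sinh (μ * t)) with hf1
  set g1 : ℝ → ℝ := fun t => E t * Real.cosh (μ * t) with hg1
  set f2 : ℝ → ℝ := fun t => E t * (Real.sinh t * Real.sinh ((μ - 1) * t)) with hf2
  set g2 : ℝ → ℝ := fun t => E t * Real.cosh ((μ + 1) * t) with hg2
  have if1 : Integrable f1 m := integrable_L hx
  have ig1 : Integrable g1 m := integrable_K hx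
  have if2 : Integrable f2 m := integrable_L hx
  have ig2 : Integrable g2 m := integrable_K hx
  have i11 : Integrable (fun z : ℝ × ℝ => f1 z.1 * g1 z.2) (m.prod m) := if1.mul_prod ig1
  have i11' : Integrable (fun z : ℝ × ℝ => g1 z.1 * f1 z.2) (m.prod m) := ig1.mul_prod if1
  have i22 : Integrable (fun z : ℝ × ℝ => f2 z.1 * g2 z.2) (m.prod m) := if2.mul_prod ig2
  have i22' : Integrable (fun z : ℝ × ℝ => g2 z.1 * f2 z.2) (m.prod m) := ig2.mul_prod if2
  set H : ℝ × ℝ → ℝ := fun z => f1 z.1 * g1 z.2 + g1 z.1 * f1 z.2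
      - (f2 z.1 * g2 z.2 + g2 z.1 * f2 z.2) with hH
  have iH : Integrable H (m.prod m) := (i11.add i11').sub (i22.add i22')
  have isum1 : Integrable (fun z : ℝ × ℝ => f1 z.1 * g1 z.2 + g1 z.1 * f1 z.2) (m.prod m) :=
    i11.add i11'
  have isum2 : Integrable (fun z : ℝ × ℝ => f2 z.1 * g2 z.2 + g2 z.1 * f2 z.2) (m.prod m) :=
    i22.add i22'
  have hv1 : ∫ z : ℝ × ℝ, f1 z.1 * g1 z.2 ∂(m.prod m) = besselL μ x * besselK μ x :=
    integral_prod_mul f1 g1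
  have hv1' : ∫ z : ℝ × ℝ, g1 z.1 * f1 z.2 ∂(m.prod m) = besselK μ x * besselL μ x :=
    integral_prod_mul g1 f1
  have hv2 : ∫ z : ℝ × ℝ, f2 z.1 * g2 z.2 ∂(m.prod m) = besselL (μ-1) x * besselK (μ+1) x :=
    integral_prod_mul f2 g2
  have hv2' : ∫ z : ℝ × ℝ, g2 z.1 * f2 z.2 ∂(m.prod m) = besselK (μ+1) x * besselL (μ-1) x :=
    integral_prod_mul g2 f2
  have hHval : ∫ z, H z ∂(m.prod m)
      = 2 * (besselL μ x * besselK μ x) - 2 * (besselL (μ-1) x * besselK (μ+1) x) := by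
    rw [hH]
    rw [integral_sub isum1 isum2, integral_add i11 i11', integral_add i22 i22',
      hv1, hv1', hv2, hv2']
    ring
  have hHpos : 0 < ∫ z, H z ∂(m.prod m) := by
    have hae : ∀ᵐ z ∂(m.prod m), z ∈ Ioi (0:ℝ) ×ˢ Ioi (0:ℝ) := by
      rw [hm, Measure.prod_restrict]
      exact ae_restrict_mem (measurableSet_Ioi.prod measurableSet_Ioi)
    rw [integral_pos_iff_support_of_nonneg_ae]
    · have hset : (0 : ENNReal) < (m.prod m) (Ioi (0:ℝ) ×ˢ Ioi (0:ℝ)) := by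
        rw [Measure.prod_prod, hm, Measure.restrict_apply_self, Real.volume_Ioi]
        simp
      refine hset.trans_le (measure_mono ?_)
      intro z hz
      · have hz1 : 0 < z.1 := hz.1
        have hz2 : 0 < z.2 := hz.2
        have hpos : 0 < H z := by
          have hk := key_pos μ z.1 z.2 hz1 hz2
          have : H z = (E z.1 * E z.2) *
              (Real.sinh z.1 * (Real.sinh (μ*z.1) * Real.cosh (μ*z.2))
                + Real.sinh z.2 * (Real.sinh (μ*z.2) * Real.cosh (μ*z.1))
                - (Real.sinh z.1 * (Real.sinh ((μ-1)*z.1) * Real.cosh ((μ+1)*z.2))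
                  + Real.sinh z.2 * (Real.sinh ((μ-1)*z.2) * Real.cosh ((μ+1)*z.1)))) := by
            rw [hH, hf1, hg1, hf2, hg2]; ring
          rw [this]
          have hE1 : 0 < E z.1 := Real.exp_pos _
          have hE2 : 0 < E z.2 := Real.exp_pos _
          positivity
        exact Function.mem_support.mpr hpos.ne'
    · filter_upwards [hae] with z hz
      have hk := key_pos μ z.1 z.2 hz.1 hz.2
      have hE1 : (0:ℝ) < E z.1 := Real.exp_pos _
      have hE2 : (0:ℝ) < E z.2 := Real.exp_pos _
      have : H z = (E z.1 * E z.2) *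
          (Real.sinh z.1 * (Real.sinh (μ*z.1) * Real.cosh (μ*z.2))
            + Real.sinh z.2 * (Real.sinh (μ*z.2) * Real.cosh (μ*z.1))
            - (Real.sinh z.1 * (Real.sinh ((μ-1)*z.1) * Real.cosh ((μ+1)*z.2))
              + Real.sinh z.2 * (Real.sinh ((μ-1)*z.2) * Real.cosh ((μ+1)*z.1)))) := by
        rw [hH, hf1, hg1, hf2, hg2]; ring
      rw [this]
      positivity
    · exact iH
  have hD : 0 < besselL μ x * besselK μ x - besselL (μ-1) x * besselK (μ+1) x := by
    rw [hHval] at hHpos; linarith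
  have hp1 := parts (ν := μ) hx
  have hp2 := parts (ν := μ - 1) hx
  have e1 : x * besselL μ x * besselK μ x = μ * besselK μ x ^ 2 := by
    linear_combination besselK μ x * hp1
  have e2 : x * besselL (μ-1) x * besselK (μ+1) x
      = (μ-1) * (besselK (μ-1) x * besselK (μ+1) x) := by
    linear_combination besselK (μ+1) x * hp2
  have e3 : x * (besselL μ x * besselK μ x - besselL (μ-1) x * besselK (μ+1) x)
      = x * besselL μ x * besselK μ x - x * besselL (μ-1) x * besselK (μ+1) x := by ring
  linarith [mul_pos hx hD, e1, e2, e3]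

theorem besselK_ratio_lower_bound_30 (ν x : ℝ) (hν : 2 ≤ ν) (hx : 0 < x) :
    besselK (ν + 1) x / besselK ν x >
      (ν + 2 + Real.sqrt ((ν - 2) ^ 2 + ((ν - 2) / (ν - 1)) * x ^ 2)) / x := by
  have hK0 : 0 < besselK ν x := besselK_pos hx
  have hKm : 0 < besselK (ν - 1) x := besselK_pos hx
  have hKmm : 0 < besselK (ν - 2) x := besselK_pos hx
  have hν1 : (0:ℝ) < ν - 1 := by linarith
  set K1 := besselK (ν + 1) x with hK1def
  set K0 := besselK ν x with hK0def
  set Km := besselK (ν - 1) x with hKmdef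
  set Kmm := besselK (ν - 2) x with hKmmdef
  have hrec1 : K1 = Km + 2 * ν / x * K0 := recurrence hx
  have hrec2 : K0 = Kmm + 2 * (ν - 1) / x * Km := by
    have h := recurrence (ν := ν - 1) (x := x) hx
    rw [show ν - 1 + 1 = ν by ring, show ν - 1 - 1 = ν - 2 by ring] at h
    exact h
  have hT : (ν - 2) * (Kmm * K0) < (ν - 1) * Km ^ 2 := by
    have h := turan (μ := ν - 1) (x := x) hx
    rw [show ν - 1 - 1 = ν - 2 by ring, show ν - 1 + 1 = ν by ring] at h
    exact h
  set E := (ν - 2) ^ 2 + ((ν - 2) / (ν - 1)) * x ^ 2 with hEdef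
  have hrec2x : x * K0 = x * Kmm + 2 * (ν - 1) * Km := by
    rw [hrec2]; field_simp
  have hzero : x * K0 - x * Kmm - 2 * (ν - 1) * Km = 0 := by linarith
  have hRHSpos : 0 < x * Km + (ν - 2) * K0 := by
    have h1 : 0 ≤ (ν - 2) * K0 := mul_nonneg (by linarith) hK0.le
    nlinarith [mul_pos hx hKm]
  have expand : (ν-1) * (x*Km + (ν-2)*K0)^2 - ((ν-2)^2*(ν-1) + (ν-2)*x^2) * K0^2
      = x^2 * ((ν-1) * Km^2 - (ν-2) * (Kmm*K0))
        - (ν-2) * x * K0 * (x*K0 - x*Kmm - 2*(ν-1)*Km) := by ring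
  have h4 : 0 < x^2 * ((ν-1) * Km^2 - (ν-2) * (Kmm*K0)) :=
    mul_pos (by positivity) (by linarith)
  have h5 : (ν-2) * x * K0 * (x*K0 - x*Kmm - 2*(ν-1)*Km) = 0 := by rw [hzero]; ring
  have key : ((ν-2)^2*(ν-1) + (ν-2)*x^2) * K0^2 < (ν-1) * (x*Km + (ν-2)*K0)^2 := by
    linarith [expand, h4, h5]
  have hE : E * (ν-1) = (ν-2)^2*(ν-1) + (ν-2)*x^2 := by
    rw [hEdef]; field_simp
  have hE2 : E * (ν-1) * K0^2 = ((ν-2)^2*(ν-1) + (ν-2)*x^2) * K0^2 := by rw [hE]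
  have h6 : (ν-1) * (E * K0^2) < (ν-1) * ((x*Km + (ν-2)*K0)^2) := by
    nlinarith [key, hE2]
  have h7 : E * K0^2 < (x*Km + (ν-2)*K0)^2 := (mul_lt_mul_iff_right₀ hν1).mp h6
  have h8 : Real.sqrt E < (x*Km + (ν-2)*K0) / K0 := by
    rw [Real.sqrt_lt' (by positivity)]
    rw [div_pow, lt_div_iff₀ (by positivity)]
    linarith [h7]
  have hs2 : Real.sqrt E * K0 < x*Km + (ν-2)*K0 := by
    have := (lt_div_iff₀ hK0).mp h8
    linarith
  have hK1x : K1 * x = Km * x + 2 * ν * K0 := by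
    rw [hrec1]; field_simp
  rw [gt_iff_lt, div_lt_div_iff₀ hx hK0]
  linarith [hs2, hK1x]
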